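/- Every K-minimal valid inequality (μ;η₀) for S(A,K,B) is K-sublinear, i.e., it satisfies condition (A.1(α)) for every α ∈ Ext(K*): ⟨μ,u⟩ ≥ 0 for all u ∈ E with Au = 0 and ⟨α,v⟩u + v ∈ K for all v ∈ Ext(K), in addition to validity (A.2). -/

import Mathlib

open RealInnerProductSpace

noncomputable section

variable {E F : Type*} [NormedAddCommGroup E] [InnerProductSpace ℝ E]
  [NormedAddCommGroup F] [InnerProductSpace ℝ F]
  [FiniteDimensional ℝ E] [FiniteDimensional ℝ F]

/-- The dual cone `K* = {y : ⟨x,y⟩ ≥ 0 for all x ∈ K}`. -/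
def DualCone (K : Set E) : Set E := {y | ∀ x ∈ K, 0 ≤ ⟪x, y⟫}

/-- A regular cone: closed, convex, a cone, pointed, and full-dimensional. -/
def IsRegularCone (K : Set E) : Prop :=
  IsClosed K ∧ Convex ℝ K ∧ (∀ c : ℝ, 0 < c → ∀ x ∈ K, c • x ∈ K) ∧
    (K ∩ (-K) ⊆ {(0 : E)}) ∧ (interior K).Nonempty

/-- `(μ; η)` is a valid linear inequality for `S`: `⟨μ,x⟩ ≥ η` on `S`. -/
def ValidIneq (S : Set E) (μ : E) (η : ℝ) : Prop := ∀ x ∈ S, η ≤ ⟪μ, x⟫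

/-- `(μ; η)` is a `K`-minimal valid inequality for `S`. -/
def KMinimal (K S : Set E) (μ : E) (η : ℝ) : Prop :=
  μ ≠ 0 ∧ ValidIneq S μ η ∧
    ∀ ρ : E, ∀ ρ₀ : ℝ, ValidIneq S ρ ρ₀ → ρ ≠ μ → μ - ρ ∈ DualCone K → ρ₀ < η

/-- `x` generates an extreme ray of the cone `K`. -/
def IsExtremeRay (K : Set E) (x : E) : Prop :=
  x ∈ K ∧ x ≠ 0 ∧ ∀ y ∈ K, ∀ z ∈ K, x = y + z → ∃ t : ℝ, 0 ≤ t ∧ y = t • x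

/-- Support function of a set `D`. -/
def SuppFn (D : Set F) (z : F) : ℝ := sSup ((fun lam => ⟪z, lam⟫) '' D)

/-- The cut generating set `D_μ = {λ : μ - A*λ ∈ K*}`. -/
def CutGenSet (K : Set E) (A : E →ₗ[ℝ] F) (μ : E) : Set F :=
  {lam | μ - LinearMap.adjoint A lam ∈ DualCone K}

/-- `(μ; η)` is a `K`-sublinear inequality for `S`: condition (A.1(α)) for every
extreme ray α of `K*`, together with validity (A.2). -/
def KSublinear (K S : Set E) (A : E →ₗ[ℝ] F) (μ : E) (η : ℝ) : Prop :=
  μ ≠ 0 ∧ ValidIneq S μ η ∧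
    ∀ α : E, IsExtremeRay (DualCone K) α →
      ∀ u : E, A u = 0 → (∀ v : E, IsExtremeRay K v → ⟪α, v⟫ • u + v ∈ K) →
        0 ≤ ⟪μ, u⟫

namespace Stmt7Aux

lemma dualCone_eq (K : Set E) : DualCone K = (ProperCone.innerDual K : Set E) := rfl

lemma zero_mem_of_regular {K : Set E} (hK : IsRegularCone K) : (0 : E) ∈ K := by
  obtain ⟨x₀, hx₀⟩ := hK.2.2.2.2
  have hx₀K : x₀ ∈ K := interior_subset hx₀
  have htend : Filter.Tendsto (fun n : ℕ => (1 / ((n : ℝ) + 1)) • x₀)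
      Filter.atTop (nhds ((0 : ℝ) • x₀)) :=
    (tendsto_one_div_add_atTop_nhds_zero_nat).smul_const x₀
  rw [zero_smul] at htend
  exact hK.1.mem_of_tendsto htend (Filter.Eventually.of_forall fun n =>
    hK.2.2.1 _ (by positivity) _ hx₀K)

lemma smul_mem_of_regular {K : Set E} (hK : IsRegularCone K) {c : ℝ} (hc : 0 ≤ c)
    {x : E} (hx : x ∈ K) : c • x ∈ K := by
  rcases hc.lt_or_eq with h | h
  · exact hK.2.2.1 c h x hx
  · rw [← h, zero_smul]; exact zero_mem_of_regular hK

/-- `K` as a `ConvexCone`. -/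
def toCone {K : Set E} (hK : IsRegularCone K) : ConvexCone ℝ E where
  carrier := K
  smul_mem' := fun c hc x hx => hK.2.2.1 c hc x hx
  add_mem' := by
    intro x hx y hy
    have h2 : (1/2 : ℝ) • x + (1/2 : ℝ) • y ∈ K :=
      hK.2.1 hx hy (by norm_num) (by norm_num) (by norm_num)
    have := hK.2.2.1 2 (by norm_num) _ h2
    rwa [smul_add, smul_smul, smul_smul, (by norm_num : (2:ℝ) * (1/2) = 1),
      one_smul, one_smul] at this

lemma dual_dual {K : Set E} (hK : IsRegularCone K) : DualCone (DualCone K) = K := by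
  let C : ProperCone ℝ E :=
    { carrier := K
      add_mem' := fun hx hy => (toCone hK).add_mem hx hy
      zero_mem' := zero_mem_of_regular hK
      smul_mem' := fun c _ hx => smul_mem_of_regular hK c.2 hx
      isClosed' := hK.1 }
  have h := ProperCone.innerDual_innerDual C
  exact Set.ext fun x => SetLike.ext_iff.1 h x

lemma dualCone_convex (K : Set E) : Convex ℝ (DualCone K) := by
  intro y hy z hz a b ha hb hab x hx
  have h1 := hy x hx
  have h2 := hz x hx
  rw [inner_add_right, real_inner_smul_right, real_inner_smul_right]
  positivity

lemma dualCone_closed (K : Set E) : IsClosed (DualCone K) := by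
  have : DualCone K = ⋂ x ∈ K, {y : E | 0 ≤ ⟪x, y⟫} := by
    ext y; simp [DualCone, Set.mem_iInter]
  rw [this]
  exact isClosed_biInter fun x _ => isClosed_le continuous_const
    (continuous_const.inner continuous_id)

lemma zero_mem_dualCone (K : Set E) : (0 : E) ∈ DualCone K := by
  intro x _; simp

/-- The dual cone of a regular cone has nonempty interior. -/
lemma interior_dualCone_nonempty {K : Set E} (hK : IsRegularCone K) :
    (interior (DualCone K)).Nonempty := by
  by_contra hempty
  rw [Set.not_nonempty_iff_eq_empty, ← Set.not_nonempty_iff_eq_empty] at hempty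
  have haff : affineSpan ℝ (DualCone K) ≠ ⊤ := by
    intro h
    exact hempty (((dualCone_convex K).interior_nonempty_iff_affineSpan_eq_top).2 h)
  have hvs : vectorSpan ℝ (DualCone K) ≠ ⊤ := by
    intro h
    exact haff ((AffineSubspace.affineSpan_eq_top_iff_vectorSpan_eq_top_of_nonempty ℝ E E
      ⟨0, zero_mem_dualCone K⟩).2 h)
  have hbot : (vectorSpan ℝ (DualCone K))ᗮ ≠ ⊥ := fun h =>
    hvs (Submodule.orthogonal_eq_bot_iff.1 h)
  obtain ⟨n, hn, hn0⟩ := Submodule.exists_mem_ne_zero_of_ne_bot hbot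
  have hinner : ∀ y ∈ DualCone K, ⟪y, n⟫ = 0 := by
    intro y hy
    have hyW : y ∈ vectorSpan ℝ (DualCone K) := by
      have := vsub_mem_vectorSpan ℝ hy (zero_mem_dualCone K)
      simpa using this
    exact (Submodule.inner_right_of_mem_orthogonal hyW hn)
  have hnK : n ∈ K := by
    rw [← dual_dual hK]
    intro y hy; rw [hinner y hy]
  have hnegK : -n ∈ K := by
    rw [← dual_dual hK]
    intro y hy; rw [inner_neg_right, hinner y hy, neg_zero]
  have : n ∈ K ∩ (-K) := ⟨hnK, by simpa using hnegK⟩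
  exact hn0 (hK.2.2.2.1 this)

/-- From an interior point of the dual cone, a uniform positivity bound on `K`. -/
lemma exists_pos_lower_bound {K : Set E} (hK : IsRegularCone K) :
    ∃ e : E, ∃ ε : ℝ, 0 < ε ∧ ∀ x ∈ K, ε * ‖x‖ ≤ ⟪e, x⟫ := by
  obtain ⟨e, he⟩ := interior_dualCone_nonempty hK
  rw [mem_interior_iff_mem_nhds, Metric.mem_nhds_iff] at he
  obtain ⟨r, hr, hball⟩ := he
  refine ⟨e, r / 2, by positivity, fun x hx => ?_⟩
  rcases eq_or_ne x 0 with rfl | hx0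
  · simp
  · have hxnorm : (0:ℝ) < ‖x‖ := norm_pos_iff.2 hx0
    set y := e - (r / 2) • (‖x‖⁻¹ • x) with hy
    have hyball : y ∈ Metric.ball e r := by
      have hsub : y - e = -((r / 2) • (‖x‖⁻¹ • x)) := by rw [hy]; abel
      have hnorm : ‖y - e‖ = r / 2 := by
        rw [hsub, norm_neg, norm_smul, norm_smul, norm_inv, norm_norm,
          Real.norm_eq_abs, abs_of_pos (by positivity : (0:ℝ) < r/2),
          inv_mul_cancel₀ hxnorm.ne', mul_one]
      rw [Metric.mem_ball, dist_eq_norm, hnorm]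
      linarith
    have hyK : y ∈ DualCone K := hball hyball
    have h0 := hyK x hx
    rw [hy, inner_sub_right, real_inner_smul_right, real_inner_smul_right,
      real_inner_self_eq_norm_sq] at h0
    have hx2 : ‖x‖⁻¹ * ‖x‖ ^ 2 = ‖x‖ := by
      rw [sq]; field_simp
    rw [hx2] at h0
    rw [real_inner_comm]
    linarith

/-- Extreme points of the base `{x ∈ K : ⟪e,x⟫ = 1}` generate extreme rays of `K`. -/
lemma extremePoint_isExtremeRay {K : Set E} (hK : IsRegularCone K) {e : E} {ε : ℝ}
    (hε : 0 < ε) (hbd : ∀ x ∈ K, ε * ‖x‖ ≤ ⟪e, x⟫)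
    {x : E} (hx : x ∈ Set.extremePoints ℝ {w ∈ K | ⟪e, w⟫ = 1}) :
    IsExtremeRay K x := by
  rw [mem_extremePoints] at hx
  obtain ⟨⟨hxK, hxe⟩, hext⟩ := hx
  have hx0 : x ≠ 0 := by
    intro h; rw [h] at hxe; simp at hxe
  refine ⟨hxK, hx0, ?_⟩
  intro y hy z hz hxyz
  have hnn : ∀ w ∈ K, 0 ≤ ⟪e, w⟫ := by
    intro w hw
    calc (0:ℝ) ≤ ε * ‖w‖ := by positivity
    _ ≤ ⟪e, w⟫ := hbd w hw
  set s := ⟪e, y⟫ with hs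
  set s' := ⟪e, z⟫ with hs'
  have hsum : s + s' = 1 := by
    rw [hs, hs', ← inner_add_right, ← hxyz, hxe]
  have hs0 : 0 ≤ s := hnn y hy
  have hs'0 : 0 ≤ s' := hnn z hz
  rcases hs0.eq_or_lt with h0 | hspos
  · -- s = 0 → y = 0
    refine ⟨0, le_refl 0, ?_⟩
    have h1 : ε * ‖y‖ ≤ 0 := by
      calc ε * ‖y‖ ≤ ⟪e, y⟫ := hbd y hy
      _ = s := hs.symm
      _ = 0 := h0.symm
    have h2 : ‖y‖ ≤ 0 := by nlinarith
    rw [zero_smul]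
    exact norm_le_zero_iff.1 h2
  rcases hs'0.eq_or_lt with h0' | hs'pos
  · -- s' = 0 → z = 0 → y = x
    have hz0 : z = 0 := by
      have h1 : ε * ‖z‖ ≤ 0 := by
        calc ε * ‖z‖ ≤ ⟪e, z⟫ := hbd z hz
        _ = s' := hs'.symm
        _ = 0 := h0'.symm
      have h2 : ‖z‖ ≤ 0 := by nlinarith
      exact norm_le_zero_iff.1 h2
    refine ⟨1, zero_le_one, ?_⟩
    rw [one_smul, hxyz, hz0, add_zero]
  · -- both positive
    set y' := s⁻¹ • y with hy'
    set z' := s'⁻¹ • z with hz'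
    have hy'B : y' ∈ {w ∈ K | ⟪e, w⟫ = 1} := by
      refine ⟨hK.2.2.1 _ (by positivity) _ hy, ?_⟩
      rw [hy', real_inner_smul_right, ← hs, inv_mul_cancel₀ hspos.ne']
    have hz'B : z' ∈ {w ∈ K | ⟪e, w⟫ = 1} := by
      refine ⟨hK.2.2.1 _ (by positivity) _ hz, ?_⟩
      rw [hz', real_inner_smul_right, ← hs', inv_mul_cancel₀ hs'pos.ne']
    have hseg : x ∈ openSegment ℝ y' z' := by
      refine ⟨s, s', hspos, hs'pos, hsum, ?_⟩
      rw [hy', hz', smul_smul, smul_smul, mul_inv_cancel₀ hspos.ne',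
        mul_inv_cancel₀ hs'pos.ne', one_smul, one_smul, ← hxyz]
    obtain ⟨hy'x, _⟩ := hext y' hy'B z' hz'B hseg
    refine ⟨s, hspos.le, ?_⟩
    rw [← hy'x, hy', smul_smul, mul_inv_cancel₀ hspos.ne', one_smul]

/-- The key invariance: if `x ↦ ⟪α,x⟫ • u + x` maps extreme rays into `K`,
it maps all of `K` into `K`. -/
lemma map_mem_of_extremeRays {K : Set E} (hK : IsRegularCone K) (α u : E)
    (hray : ∀ v : E, IsExtremeRay K v → ⟪α, v⟫ • u + v ∈ K) :
    ∀ x ∈ K, ⟪α, x⟫ • u + x ∈ K := by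
  obtain ⟨e, ε, hε, hbd⟩ := exists_pos_lower_bound hK
  set g : E →L[ℝ] E := (innerSL ℝ α).smulRight u + ContinuousLinearMap.id ℝ E with hg
  have hgapp : ∀ x : E, g x = ⟪α, x⟫ • u + x := by
    intro x; rfl
  set C : Set E := g ⁻¹' K with hC
  have hCclosed : IsClosed C := hK.1.preimage g.continuous
  have hCconvex : Convex ℝ C := by
    intro a ha b hb ta tb hta htb htab
    show g _ ∈ K
    rw [map_add, map_smul, map_smul]
    exact hK.2.1 ha hb hta htb htab
  set B : Set E := {w ∈ K | ⟪e, w⟫ = 1} with hB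
  have hBconv : Convex ℝ B := by
    have h1 : Convex ℝ {w : E | ⟪e, w⟫ = 1} :=
      convex_hyperplane (f := fun w : E => ⟪e, w⟫)
        ⟨fun a b => inner_add_right e a b, fun c a => real_inner_smul_right e a c⟩ 1
    exact hK.2.1.inter h1
  have hBclosed : IsClosed B :=
    hK.1.inter (isClosed_eq (continuous_const.inner continuous_id) continuous_const)
  have hBbdd : Bornology.IsBounded B := by
    rw [isBounded_iff_forall_norm_le]
    refine ⟨ε⁻¹, fun w hw => ?_⟩
    have h1 := hbd w hw.1
    rw [hw.2] at h1
    have h2 : 0 ≤ ε⁻¹ * (1 - ε * ‖w‖) :=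
      mul_nonneg (inv_pos.2 hε).le (by linarith)
    have h3 : ε⁻¹ * ε = 1 := inv_mul_cancel₀ hε.ne'
    nlinarith
  have hBcomp : IsCompact B := Metric.isCompact_of_isClosed_isBounded hBclosed hBbdd
  have hBsubC : B ⊆ C := by
    have hkm := closure_convexHull_extremePoints hBcomp hBconv
    rw [← hkm]
    refine closure_minimal (convexHull_min ?_ hCconvex) hCclosed
    intro w hw
    show g w ∈ K
    rw [hgapp]
    exact hray w (extremePoint_isExtremeRay hK hε hbd hw)
  intro x hx
  rcases eq_or_ne x 0 with rfl | hx0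
  · simpa using zero_mem_of_regular hK
  · have ht : (0:ℝ) < ⟪e, x⟫ := by
      have := hbd x hx
      have hn : (0:ℝ) < ‖x‖ := norm_pos_iff.2 hx0
      nlinarith
    set t := ⟪e, x⟫ with hT
    have hxB : t⁻¹ • x ∈ B := by
      refine ⟨hK.2.2.1 _ (by positivity) _ hx, ?_⟩
      rw [real_inner_smul_right, ← hT, inv_mul_cancel₀ ht.ne']
    have hgxK : g (t⁻¹ • x) ∈ K := hBsubC hxB
    have : g x = t • g (t⁻¹ • x) := by
      rw [← map_smul, smul_smul, mul_inv_cancel₀ ht.ne', one_smul]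
    rw [← hgapp, this]
    exact hK.2.2.1 _ ht _ hgxK

end Stmt7Aux

open Stmt7Aux in
/-- Every `K`-minimal valid inequality is `K`-sublinear. -/
theorem stmt7 (K : Set E) (A : E →ₗ[ℝ] F) (B : Set F)
    (hK : IsRegularCone K)
    (μ : E) (η₀ : ℝ)
    (hmin : KMinimal K {x | x ∈ K ∧ A x ∈ B} μ η₀) :
    KSublinear K {x | x ∈ K ∧ A x ∈ B} A μ η₀ := by
  obtain ⟨hμ0, hvalid, hminimal⟩ := hmin
  refine ⟨hμ0, hvalid, ?_⟩
  intro α hα u hAu hray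
  by_contra hneg
  push_neg at hneg
  have hgK : ∀ x ∈ K, ⟪α, x⟫ • u + x ∈ K := map_mem_of_extremeRays hK α u hray
  set ρ := μ + ⟪μ, u⟫ • α with hρ
  have hρvalid : ValidIneq {x | x ∈ K ∧ A x ∈ B} ρ η₀ := by
    intro x hx
    have hgx : ⟪α, x⟫ • u + x ∈ K := hgK x hx.1
    have hAgx : A (⟪α, x⟫ • u + x) ∈ B := by
      rw [map_add, map_smul, hAu, smul_zero, zero_add]
      exact hx.2
    have h1 := hvalid _ ⟨hgx, hAgx⟩
    have h2 : ⟪μ, ⟪α, x⟫ • u + x⟫ = ⟪ρ, x⟫ := by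
      rw [inner_add_right, real_inner_smul_right, hρ, inner_add_left,
        real_inner_smul_left]
      ring
    rwa [h2] at h1
  have hρne : ρ ≠ μ := by
    intro h
    rw [hρ, add_eq_left, smul_eq_zero] at h
    rcases h with h | h
    · exact absurd h (ne_of_lt hneg)
    · exact hα.2.1 h
  have hdc : μ - ρ ∈ DualCone K := by
    intro x hx
    have hα' : 0 ≤ ⟪x, α⟫ := hα.1 x hx
    have : μ - ρ = (-⟪μ, u⟫) • α := by rw [hρ]; module
    rw [this, real_inner_smul_right]
    have : 0 ≤ -⟪μ, u⟫ := by linarith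
    positivity
  exact absurd (hminimal ρ η₀ hρvalid hρne hdc) (lt_irrefl η₀)
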